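/- For every n ∈ ℕ and every integer ℓ, Σ_{w ∈ S_n} ∏_{t=1}^{n} ( ℓ − 2·|J_w^{<t}| ) = n! · ∏_{j=0}^{n−1} (ℓ − j). (This is the dimension formula for the cyclotomic nilHecke algebra H^{(0)}_{ℓ,n} of Corollary 3.11, expressed as a pure integer identity.) -/

import Mathlib

open Finset Equiv

namespace Stmt9

variable {n : ℕ}

def fperm (v : Fin (n+1)) (e : Perm (Fin n)) : Perm (Fin (n+1)) :=
  finSuccEquivLast.trans (e.optionCongr.trans (finSuccEquiv' v).symm)

@[simp] lemma fperm_last (v : Fin (n+1)) (e : Perm (Fin n)) :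
    fperm v e (Fin.last n) = v := by
  simp [fperm]

@[simp] lemma fperm_castSucc (v : Fin (n+1)) (e : Perm (Fin n)) (i : Fin n) :
    fperm v e i.castSucc = v.succAbove (e i) := by
  simp [fperm, finSuccEquiv'_symm_some]

lemma fperm_bijective :
    Function.Bijective (fun p : Fin (n+1) × Perm (Fin n) => fperm p.1 p.2) := by
  rw [Fintype.bijective_iff_injective_and_card]
  constructor
  · rintro ⟨v, e⟩ ⟨v', e'⟩ h
    have hv : v = v' := by
      have := congrArg (fun σ : Perm (Fin (n+1)) => σ (Fin.last n)) h
      simpa using this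
    subst hv
    have he : e = e' := by
      ext i
      have := congrArg (fun σ : Perm (Fin (n+1)) => σ i.castSucc) h
      simp only [fperm_castSucc] at this
      exact congrArg Fin.val (Fin.succAbove_right_injective this)
    simp [he]
  · simp [Fintype.card_perm, Nat.factorial_succ, mul_comm]

lemma card_last (v : Fin (n+1)) (e : Perm (Fin n)) :
    (univ.filter (fun j => j < Fin.last n ∧ fperm v e j < fperm v e (Fin.last n))).card
      = (v : ℕ) := by
  have h1 : (univ.filter fun j => j < Fin.last n ∧ fperm v e j < fperm v e (Fin.last n))
      = univ.filter (fun j => fperm v e j < v) := by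
    ext j
    simp only [mem_filter, mem_univ, true_and, fperm_last]
    refine ⟨fun h => h.2, fun h => ⟨?_, h⟩⟩
    rcases eq_or_lt_of_le (Fin.le_last j) with hj | hj
    · exfalso
      rw [hj, fperm_last] at h
      exact lt_irrefl _ h
    · exact hj
  rw [h1]
  have h2 : (univ.filter (fun j => fperm v e j < v)).card
      = (univ.filter (fun j : Fin (n+1) => j < v)).card := by
    apply Finset.card_nbij' (fun j => fperm v e j) (fun j => (fperm v e).symm j)
    · intro a ha; simp only [mem_filter, mem_univ, true_and] at *; simpa using ha
    · intro b hb; simp only [mem_filter, mem_univ, true_and] at *; simpa using hb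
    · intro a _; simp
    · intro b _; simp
  rw [h2]
  have : (univ.filter (fun j : Fin (n+1) => j < v)) = Finset.Iio v := by
    ext j; simp
  rw [this, Fin.card_Iio]

lemma card_cast (v : Fin (n+1)) (e : Perm (Fin n)) (t : Fin n) :
    (univ.filter fun j => j < t.castSucc ∧ fperm v e j < fperm v e t.castSucc).card
    = (univ.filter fun i => i < t ∧ e i < e t).card := by
  refine Finset.card_bij' (fun j hj => j.castPred (by
      simp only [mem_filter, mem_univ, true_and] at hj
      exact Fin.ne_last_of_lt (lt_of_lt_of_le hj.1 (Fin.le_last _))))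
    (fun i _ => i.castSucc) ?_ ?_ ?_ ?_
  · intro a ha
    simp only [mem_filter, mem_univ, true_and] at ha ⊢
    have hne : a ≠ Fin.last n := Fin.ne_last_of_lt (lt_of_lt_of_le ha.1 (Fin.le_last _))
    have hc : (a.castPred hne).castSucc = a := Fin.castSucc_castPred a hne
    constructor
    · rw [← Fin.castSucc_lt_castSucc_iff, hc]; exact ha.1
    · rw [← Fin.succAbove_lt_succAbove_iff (p := v), ← fperm_castSucc v e, ← fperm_castSucc v e, hc]
      exact ha.2
  · intro i hi
    simp only [mem_filter, mem_univ, true_and] at hi ⊢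
    exact ⟨Fin.castSucc_lt_castSucc_iff.mpr hi.1, by
      rw [fperm_castSucc, fperm_castSucc]
      exact Fin.succAbove_lt_succAbove_iff.mpr hi.2⟩
  · intro a ha; simp
  · intro i hi; simp

lemma sum_linear (l : ℤ) (n : ℕ) :
    ∑ v : Fin (n+1), (l - 2 * (v : ℤ)) = (n + 1 : ℤ) * (l - n) := by
  induction n with
  | zero => simp
  | succ n ih =>
    rw [Fin.sum_univ_castSucc]
    simp only [Fin.coe_castSucc, Fin.val_last]
    rw [ih]
    push_cast
    ring

end Stmt9

open Stmt9 in
/-- Corollary 3.11 of the paper (dimension of the cyclotomic nilHecke algebra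
`H^{(0)}_{ℓ,n}`), as a pure integer identity:
`Σ_{w ∈ S_n} ∏_t (ℓ − 2|J_w^{<t}|) = n! · ∏_{j=0}^{n−1} (ℓ − j)`. -/
theorem stmt9 (n : ℕ) (l : ℤ) :
    ∑ w : Equiv.Perm (Fin n), ∏ t : Fin n,
        (l - 2 * ((Finset.univ.filter (fun j => j < t ∧ w j < w t)).card : ℤ))
      = (n.factorial : ℤ) * ∏ j ∈ Finset.range n, (l - (j : ℤ)) := by
  induction n generalizing l with
  | zero => simp
  | succ n ih =>
    rw [← Function.Bijective.sum_comp (fperm_bijective (n := n))]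
    have key : ∀ p : Fin (n+1) × Equiv.Perm (Fin n),
        (∏ t : Fin (n+1), (l - 2 * ((Finset.univ.filter
            (fun j => j < t ∧ fperm p.1 p.2 j < fperm p.1 p.2 t)).card : ℤ)))
        = (∏ t : Fin n, (l - 2 * ((Finset.univ.filter
            (fun j => j < t ∧ p.2 j < p.2 t)).card : ℤ))) * (l - 2 * (p.1 : ℤ)) := by
      rintro ⟨v, e⟩
      rw [Fin.prod_univ_castSucc]
      congr 1
      · apply Finset.prod_congr rfl
        intro t _
        rw [card_cast]
      · rw [card_last]
    simp only [key]
    rw [Fintype.sum_prod_type]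
    have : ∑ v : Fin (n+1), ∑ e : Equiv.Perm (Fin n),
        (∏ t : Fin n, (l - 2 * ((Finset.univ.filter
            (fun j => j < t ∧ e j < e t)).card : ℤ))) * (l - 2 * (v : ℤ))
        = (∑ e : Equiv.Perm (Fin n), ∏ t : Fin n, (l - 2 * ((Finset.univ.filter
            (fun j => j < t ∧ e j < e t)).card : ℤ))) * ∑ v : Fin (n+1), (l - 2 * (v : ℤ)) := by
      simp_rw [← Finset.sum_mul]
      rw [← Finset.mul_sum]
    rw [this, ih l, sum_linear, Finset.prod_range_succ, Nat.factorial_succ]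
    push_cast
    ring
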